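/- If π : [0,1] → ℝ is continuously differentiable with π(z) integrating to 0 over [0,1] (and suitable integrability of π_k at the endpoints), then ∫_{-∞}^{∞} π'(Φ(x)) φ(x)² dx = ∫_0^1 π(z) Φ⁻¹(z) dz, i.e. E[π'(Z)φ(e)] = c₁ where Z = Φ(e) and e ~ N(0,1). -/

import Mathlib

open MeasureTheory ProbabilityTheory intervalIntegral
open Set Filter

noncomputable def stdNormalPDF (x : ℝ) : ℝ := gaussianPDFReal 0 1 x

noncomputable def stdNormalCDF (x : ℝ) : ℝ :=
  ∫ t in Set.Iic x, stdNormalPDF t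

lemma pdf_eq : stdNormalPDF = fun x => (Real.sqrt (2 * Real.pi))⁻¹ * Real.exp (-x ^ 2 / 2) := by
  funext x
  simp [stdNormalPDF, gaussianPDFReal]

lemma pdf_pos (x : ℝ) : 0 < stdNormalPDF x := gaussianPDFReal_pos 0 1 x one_ne_zero

lemma pdf_cont : Continuous stdNormalPDF := by
  rw [pdf_eq]
  exact continuous_const.mul (Real.continuous_exp.comp ((continuous_pow 2).neg.div_const 2))

lemma pdf_integrable : Integrable stdNormalPDF := integrable_gaussianPDFReal 0 1

lemma neg_sq_half_hasDeriv (x : ℝ) : HasDerivAt (fun x : ℝ => -x ^ 2 / 2) (-x) x := by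
  have := ((hasDerivAt_pow 2 x).neg).div_const 2
  exact this.congr_deriv (by norm_num; ring)

lemma pdf_hasDerivAt (x : ℝ) : HasDerivAt stdNormalPDF (-x * stdNormalPDF x) x := by
  rw [pdf_eq]
  have := ((neg_sq_half_hasDeriv x).exp).const_mul (Real.sqrt (2 * Real.pi))⁻¹
  exact this.congr_deriv (by ring)

lemma neg_sq_half_tendsto_top : Tendsto (fun x : ℝ => -x ^ 2 / 2) atTop atBot := by
  have h : Tendsto (fun x : ℝ => x ^ 2) atTop atTop := tendsto_pow_atTop two_ne_zero
  exact (tendsto_neg_atBot_iff.mpr h).atBot_div_const (by norm_num)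

lemma neg_sq_half_tendsto_bot : Tendsto (fun x : ℝ => -x ^ 2 / 2) atBot atBot := by
  have h : Tendsto (fun x : ℝ => x ^ 2) atTop atTop := tendsto_pow_atTop two_ne_zero
  have h2 : Tendsto (fun x : ℝ => x ^ 2) atBot atTop := by
    have := h.comp tendsto_neg_atBot_atTop
    have e : ((fun x : ℝ => x ^ 2) ∘ Neg.neg) = fun x : ℝ => x ^ 2 := by
      funext x; simp [Function.comp]
    rwa [e] at this
  exact (tendsto_neg_atBot_iff.mpr h2).atBot_div_const (by norm_num)

lemma pdf_tendsto_top : Tendsto stdNormalPDF atTop (nhds 0) := by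
  rw [pdf_eq]
  simpa using (Real.tendsto_exp_atBot.comp neg_sq_half_tendsto_top).const_mul
    (Real.sqrt (2 * Real.pi))⁻¹

lemma pdf_tendsto_bot : Tendsto stdNormalPDF atBot (nhds 0) := by
  rw [pdf_eq]
  simpa using (Real.tendsto_exp_atBot.comp neg_sq_half_tendsto_bot).const_mul
    (Real.sqrt (2 * Real.pi))⁻¹

lemma cdf_sub (a b : ℝ) :
    stdNormalCDF b - stdNormalCDF a = ∫ t in a..b, stdNormalPDF t :=
  integral_Iic_sub_Iic pdf_integrable.integrableOn pdf_integrable.integrableOn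

lemma cdf_eq_fun : stdNormalCDF = fun x => stdNormalCDF 0 + ∫ t in (0:ℝ)..x, stdNormalPDF t := by
  funext x
  rw [← cdf_sub 0 x]; ring

lemma cdf_hasDerivAt (x : ℝ) : HasDerivAt stdNormalCDF (stdNormalPDF x) x := by
  rw [cdf_eq_fun]
  exact (intervalIntegral.integral_hasDerivAt_right (pdf_cont.intervalIntegrable 0 x)
    (pdf_cont.stronglyMeasurable.stronglyMeasurableAtFilter) pdf_cont.continuousAt).const_add _

lemma cdf_strictMono : StrictMono stdNormalCDF :=
  strictMono_of_deriv_pos fun x => by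
    rw [(cdf_hasDerivAt x).deriv]; exact pdf_pos x

lemma cdf_total : ∫ x, stdNormalPDF x = 1 := by
  simpa [stdNormalPDF] using integral_gaussianPDFReal_eq_one 0 one_ne_zero

lemma cdf_pos (x : ℝ) : 0 < stdNormalCDF x := by
  have h1 : 0 ≤ stdNormalCDF (x - 1) :=
    setIntegral_nonneg measurableSet_Iic fun t _ => (pdf_pos t).le
  have h2 : 0 < ∫ t in (x-1)..x, stdNormalPDF t :=
    intervalIntegral_pos_of_pos (pdf_cont.intervalIntegrable _ _) pdf_pos (by linarith)
  have := cdf_sub (x - 1) x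
  linarith

lemma cdf_lt_one (x : ℝ) : stdNormalCDF x < 1 := by
  have key : stdNormalCDF x + ∫ t in Set.Ioi x, stdNormalPDF t = 1 := by
    rw [stdNormalCDF, integral_Iic_add_Ioi pdf_integrable.integrableOn
      pdf_integrable.integrableOn, cdf_total]
  have h2 : 0 < ∫ t in x..(x+1), stdNormalPDF t :=
    intervalIntegral_pos_of_pos (pdf_cont.intervalIntegrable _ _) pdf_pos (by linarith)
  have h3 : (∫ t in x..(x+1), stdNormalPDF t) ≤ ∫ t in Set.Ioi x, stdNormalPDF t := by
    rw [intervalIntegral.integral_of_le (by linarith : x ≤ x + 1)]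
    exact setIntegral_mono_set pdf_integrable.integrableOn
      (ae_of_all _ fun t => (pdf_pos t).le)
      (HasSubset.Subset.eventuallyLE Set.Ioc_subset_Ioi_self)
  linarith

lemma cdf_tendsto_one : Tendsto stdNormalCDF atTop (nhds 1) := by
  have h : Tendsto (fun b => ∫ t in (0:ℝ)..b, stdNormalPDF t) atTop
      (nhds (∫ t in Set.Ioi (0:ℝ), stdNormalPDF t)) :=
    intervalIntegral_tendsto_integral_Ioi 0 pdf_integrable.integrableOn tendsto_id
  have key : stdNormalCDF 0 + ∫ t in Set.Ioi (0:ℝ), stdNormalPDF t = 1 := by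
    rw [stdNormalCDF, integral_Iic_add_Ioi pdf_integrable.integrableOn
      pdf_integrable.integrableOn, cdf_total]
  rw [cdf_eq_fun]
  simpa [key] using h.const_add (stdNormalCDF 0)

lemma cdf_cont : Continuous stdNormalCDF :=
  continuous_iff_continuousAt.mpr fun x => (cdf_hasDerivAt x).continuousAt

lemma cdf_tendsto_zero : Tendsto stdNormalCDF atBot (nhds 0) := by
  have h : Tendsto (fun a => ∫ t in a..(0:ℝ), stdNormalPDF t) atBot
      (nhds (stdNormalCDF 0)) :=
    intervalIntegral_tendsto_integral_Iic 0 pdf_integrable.integrableOn tendsto_id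
  have key : ∀ a, stdNormalCDF a = stdNormalCDF 0 - ∫ t in a..(0:ℝ), stdNormalPDF t := by
    intro a; have := cdf_sub a 0; linarith
  have h2 : Tendsto (fun a => stdNormalCDF 0 - ∫ t in a..(0:ℝ), stdNormalPDF t) atBot
      (nhds (stdNormalCDF 0 - stdNormalCDF 0)) := tendsto_const_nhds.sub h
  simpa using h2.congr fun a => (key a).symm

lemma range_cdf : Set.range stdNormalCDF = Set.Ioo 0 1 := by
  apply subset_antisymm
  · rintro y ⟨x, rfl⟩
    exact ⟨cdf_pos x, cdf_lt_one x⟩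
  · rintro y ⟨hy0, hy1⟩
    obtain ⟨a, ha⟩ := (cdf_tendsto_zero.eventually_lt_const hy0).exists
    obtain ⟨b, hb⟩ := (cdf_tendsto_one.eventually_const_lt hy1).exists
    exact intermediate_value_univ a b cdf_cont ⟨ha.le, hb.le⟩

lemma inv_continuousAt {Φinv : ℝ → ℝ} (hleft : Function.LeftInverse Φinv stdNormalCDF)
    {y : ℝ} (hy : y ∈ Set.range stdNormalCDF) : ContinuousAt Φinv y := by
  apply continuousAt_of_monotoneOn_of_image_mem_nhds (f := Φinv) (s := Set.range stdNormalCDF)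
  · rintro u ⟨x1, rfl⟩ v ⟨x2, rfl⟩ huv
    rw [hleft, hleft]
    exact cdf_strictMono.le_iff_le.mp huv
  · rw [range_cdf]
    exact isOpen_Ioo.mem_nhds (range_cdf ▸ hy)
  · have himg : Φinv '' Set.range stdNormalCDF = Set.univ := by
      rw [← Set.range_comp, hleft.comp_eq_id, Set.range_id]
    rw [himg]
    exact Filter.univ_mem

/-- `E[π'(Z) φ(e)] = ∫₀¹ π(z) Φ⁻¹(z) dz` for `e ~ N(0,1)`, `Z = Φ(e)`, when `π` is `C¹`
with zero mean on `[0,1]` and the relevant integrands are integrable. -/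
theorem integral_deriv_comp_cdf_eq_c1 (π : ℝ → ℝ) (Φinv : ℝ → ℝ)
    (hπ : ContDiff ℝ 1 π)
    (hzero : ∫ z in (0:ℝ)..1, π z = 0)
    (hleft : Function.LeftInverse Φinv stdNormalCDF)
    (hint1 : Integrable (fun x => deriv π (stdNormalCDF x) * stdNormalPDF x ^ 2))
    (hint2 : IntervalIntegrable (fun z => π z * Φinv z) volume 0 1) :
    ∫ x, deriv π (stdNormalCDF x) * stdNormalPDF x ^ 2 =
      ∫ z in (0:ℝ)..1, π z * Φinv z := by
  have hπc : Continuous π := hπ.continuous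
  -- bound on π over [0,1]
  obtain ⟨M, hM⟩ := (isCompact_Icc (a := (0:ℝ)) (b := 1)).exists_bound_of_continuousOn
    hπc.continuousOn
  have hcdf_mem : ∀ x, stdNormalCDF x ∈ Set.Icc (0:ℝ) 1 :=
    fun x => ⟨(cdf_pos x).le, (cdf_lt_one x).le⟩
  set g : ℝ → ℝ := fun x => π (stdNormalCDF x) * (x * stdNormalPDF x) with hg_def
  have hg_cont : Continuous g := (hπc.comp cdf_cont).mul (continuous_id.mul pdf_cont)
  -- integrability of g
  have hxpdf : Integrable (fun x => x * stdNormalPDF x) := by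
    have h1 := integrable_mul_exp_neg_mul_sq (by norm_num : (0:ℝ) < 1/2)
    have h2 := h1.const_mul (Real.sqrt (2 * Real.pi))⁻¹
    refine h2.congr (Filter.Eventually.of_forall fun x => ?_)
    rw [pdf_eq]
    have hexp : Real.exp (-(1/2) * x ^ 2) = Real.exp (-x ^ 2 / 2) := by ring_nf
    dsimp only
    rw [hexp]; ring
  have hg_int : Integrable g := by
    refine Integrable.mono' ((hxpdf.abs).const_mul M) hg_cont.aestronglyMeasurable
      (Filter.Eventually.of_forall fun x => ?_)
    have h1 : ‖g x‖ = |π (stdNormalCDF x)| * |x * stdNormalPDF x| := by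
      rw [hg_def]; simp [abs_mul]
    rw [h1]
    exact mul_le_mul_of_nonneg_right (hM _ (hcdf_mem x)) (abs_nonneg _)
  -- F and its derivative
  set F : ℝ → ℝ := fun x => π (stdNormalCDF x) * stdNormalPDF x with hF_def
  have hFderiv : ∀ x, HasDerivAt F
      (deriv π (stdNormalCDF x) * stdNormalPDF x ^ 2 - g x) x := by
    intro x
    have h1 : HasDerivAt π (deriv π (stdNormalCDF x)) (stdNormalCDF x) :=
      ((hπ.differentiable one_ne_zero) (stdNormalCDF x)).hasDerivAt
    have h2 := (h1.comp x (cdf_hasDerivAt x)).mul (pdf_hasDerivAt x)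
    exact h2.congr_deriv (by rw [hg_def]; simp [Function.comp]; ring)
  -- limits of F
  have hbound : ∀ x, ‖F x‖ ≤ M * stdNormalPDF x := by
    intro x
    rw [hF_def]
    simp only [norm_mul, Real.norm_eq_abs, abs_of_pos (pdf_pos x)]
    exact mul_le_mul_of_nonneg_right (hM _ (hcdf_mem x)) (pdf_pos x).le
  have hFtop : Filter.Tendsto F atTop (nhds 0) := by
    refine squeeze_zero_norm hbound ?_
    simpa using pdf_tendsto_top.const_mul M
  have hFbot : Filter.Tendsto F atBot (nhds 0) := by
    refine squeeze_zero_norm hbound ?_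
    simpa using pdf_tendsto_bot.const_mul M
  -- integral of F' over ℝ is 0
  set D : ℝ → ℝ := fun x => deriv π (stdNormalCDF x) * stdNormalPDF x ^ 2 - g x with hD_def
  have hD_int : Integrable D := hint1.sub hg_int
  have hIic : ∫ x in Set.Iic (0:ℝ), D x = F 0 - 0 :=
    integral_Iic_of_hasDerivAt_of_tendsto' (fun x _ => hFderiv x) hD_int.integrableOn hFbot
  have hIoi : ∫ x in Set.Ioi (0:ℝ), D x = 0 - F 0 :=
    integral_Ioi_of_hasDerivAt_of_tendsto' (fun x _ => hFderiv x) hD_int.integrableOn hFtop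
  have hDzero : ∫ x, D x = 0 := by
    rw [← integral_Iic_add_Ioi hD_int.integrableOn hD_int.integrableOn, hIic, hIoi]
    ring
  have hmain : ∫ x, deriv π (stdNormalCDF x) * stdNormalPDF x ^ 2 = ∫ x, g x := by
    have := integral_sub hint1 hg_int
    rw [hD_def] at hDzero
    rw [this] at hDzero
    linarith
  rw [hmain]
  -- change of variables
  set h : ℝ → ℝ := fun z => π z * Φinv z with hh_def
  have hIcc01 : IntegrableOn h (Set.Icc (0:ℝ) 1) :=
    (intervalIntegrable_iff_integrableOn_Icc_of_le (by norm_num)).mp hint2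
  set P : ℝ → ℝ := fun u => ∫ z in (0:ℝ)..u, h z with hP_def
  have hPcont : ContinuousOn P (Set.Icc (0:ℝ) 1) := by
    have := continuousOn_primitive_interval (a := (0:ℝ)) (b := 1) (f := h) (μ := volume)
      (by rwa [Set.uIcc_of_le (by norm_num : (0:ℝ) ≤ 1)])
    rwa [Set.uIcc_of_le (by norm_num : (0:ℝ) ≤ 1)] at this
  set A : ℕ → ℝ := fun n => stdNormalCDF (-(n:ℝ)) with hA_def
  set B : ℕ → ℝ := fun n => stdNormalCDF (n:ℝ) with hB_def
  have hnegtend : Filter.Tendsto (fun n : ℕ => -(n:ℝ)) atTop atBot :=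
    tendsto_neg_atBot_iff.mpr tendsto_natCast_atTop_atTop
  have hA_tend : Filter.Tendsto A atTop (nhds 0) := cdf_tendsto_zero.comp hnegtend
  have hB_tend : Filter.Tendsto B atTop (nhds 1) :=
    cdf_tendsto_one.comp tendsto_natCast_atTop_atTop
  have step1 : Filter.Tendsto (fun n : ℕ => ∫ x in (-(n:ℝ))..(n:ℝ), g x) atTop
      (nhds (∫ x, g x)) :=
    intervalIntegral_tendsto_integral hg_int hnegtend tendsto_natCast_atTop_atTop
  have step2 : ∀ n : ℕ, (∫ x in (-(n:ℝ))..(n:ℝ), g x) = ∫ z in A n..B n, h z := by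
    intro n
    have hhcont : ContinuousOn h (stdNormalCDF '' Set.uIcc (-(n:ℝ)) (n:ℝ)) := by
      refine hπc.continuousOn.mul fun y hy => ?_
      exact (inv_continuousAt hleft (Set.image_subset_range _ _ hy)).continuousWithinAt
    have := integral_comp_smul_deriv' (a := -(n:ℝ)) (b := (n:ℝ))
      (f := stdNormalCDF) (f' := stdNormalPDF) (g := h)
      (fun x _ => cdf_hasDerivAt x) pdf_cont.continuousOn hhcont
    rw [← this]
    refine intervalIntegral.integral_congr fun x _ => ?_
    simp only [Function.comp, smul_eq_mul, hh_def, hg_def, hleft x]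
    ring
  have hmemA : ∀ n, A n ∈ Set.uIcc (0:ℝ) 1 := by
    intro n
    rw [Set.uIcc_of_le (by norm_num : (0:ℝ) ≤ 1)]
    exact hcdf_mem _
  have hmemB : ∀ n, B n ∈ Set.uIcc (0:ℝ) 1 := by
    intro n
    rw [Set.uIcc_of_le (by norm_num : (0:ℝ) ≤ 1)]
    exact hcdf_mem _
  have step3 : ∀ n : ℕ, (∫ z in A n..B n, h z) = P (B n) - P (A n) := by
    intro n
    rw [hP_def]
    exact (intervalIntegral.integral_interval_sub_left
      (hint2.mono_set (Set.uIcc_subset_uIcc Set.left_mem_uIcc (hmemB n)))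
      (hint2.mono_set (Set.uIcc_subset_uIcc Set.left_mem_uIcc (hmemA n)))).symm
  have hB_tend' : Filter.Tendsto B atTop (nhdsWithin 1 (Set.Icc (0:ℝ) 1)) := by
    rw [tendsto_nhdsWithin_iff]
    exact ⟨hB_tend, Filter.Eventually.of_forall fun n => hcdf_mem _⟩
  have hA_tend' : Filter.Tendsto A atTop (nhdsWithin 0 (Set.Icc (0:ℝ) 1)) := by
    rw [tendsto_nhdsWithin_iff]
    exact ⟨hA_tend, Filter.Eventually.of_forall fun n => hcdf_mem _⟩
  have step4 : Filter.Tendsto (fun n : ℕ => P (B n) - P (A n)) atTop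
      (nhds (P 1 - P 0)) := by
    exact ((hPcont 1 (by norm_num)).tendsto.comp hB_tend').sub
      ((hPcont 0 (by norm_num)).tendsto.comp hA_tend')
  have hP0 : P 0 = 0 := by rw [hP_def]; simp
  have : ∫ x, g x = P 1 - P 0 := by
    refine tendsto_nhds_unique ?_ step4
    refine step1.congr fun n => ?_
    rw [step2 n, step3 n]
  rw [this, hP0, hP_def]
  simp [hh_def]
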